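/- Let p be a prime with p ≡ 1 (mod 3), let χ be one of the two nontrivial cubic characters of F_p*, and let a,b,c,d be nonzero elements of F_p. Then the number N(p) of solutions in F_p⁴ of a·x³+b·y³+c·z³+d·t³ = 0 satisfies N(p) = p³ + p(p−1)·[χ(ab/cd) + χ̄(ab/cd) + χ(ac/bd) + χ̄(ac/bd) + χ(ad/bc) + χ̄(ad/bc)]. -/

import Mathlib

open Finset Polynomial

section Helpers2
variable {p : ℕ} [Fact p.Prime]

lemma chi_cube_val (χ : MulChar (ZMod p) ℂ) (hχ3 : χ ^ 3 = 1) {u : ZMod p} (hu : u ≠ 0) :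
    (χ u) ^ 3 = 1 := by
  rw [← MulChar.pow_apply' χ (by norm_num) u, hχ3,
    MulChar.one_apply (isUnit_iff_ne_zero.mpr hu)]

lemma chi_ne_zero (χ : MulChar (ZMod p) ℂ) (hχ3 : χ ^ 3 = 1) {u : ZMod p} (hu : u ≠ 0) :
    χ u ≠ 0 := by
  intro h
  have := chi_cube_val χ hχ3 hu
  rw [h] at this
  simp at this

lemma chi_inv_val (χ : MulChar (ZMod p) ℂ) (hχ3 : χ ^ 3 = 1) {u : ZMod p} (hu : u ≠ 0) :
    χ u⁻¹ = (χ u) ^ 2 := by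
  have h3 := chi_cube_val χ hχ3 hu
  have h0 := chi_ne_zero χ hχ3 hu
  apply mul_left_cancel₀ h0
  rw [← map_mul, mul_inv_cancel₀ hu, MulChar.map_one]
  linear_combination -h3

lemma chi_conj (χ : MulChar (ZMod p) ℂ) (hχ3 : χ ^ 3 = 1) {u : ZMod p} (hu : u ≠ 0) :
    (starRingEnd ℂ) (χ u) = χ u⁻¹ := by
  have h3 := chi_cube_val χ hχ3 hu
  have habs : ‖χ u‖ = 1 := by
    have h : ‖χ u‖ ^ 3 = 1 := by
      rw [← norm_pow, h3, norm_one]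
    nlinarith [norm_nonneg (χ u), sq_nonneg (‖χ u‖ - 1),
      sq_nonneg (‖χ u‖ + 1)]
  rw [chi_inv_val χ hχ3 hu, ← Complex.inv_eq_conj habs]
  have h0 := chi_ne_zero χ hχ3 hu
  field_simp
  linear_combination -h3

lemma chi_div (χ : MulChar (ZMod p) ℂ) (hχ3 : χ ^ 3 = 1) {x y : ZMod p} (hy : y ≠ 0) :
    χ (x / y) = χ x * (χ y) ^ 2 := by
  rw [div_eq_mul_inv, map_mul, chi_inv_val χ hχ3 hy]



lemma card_cube_roots_one (h3 : p % 3 = 1) :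
    (univ.filter fun y : ZMod p => y ^ 3 = 1).card = 3 := by
  have hp2 : 2 ≤ p := (Fact.out : p.Prime).two_le
  have hd : 3 ∣ p - 1 := by omega
  obtain ⟨g, hg⟩ := IsCyclic.exists_generator (α := (ZMod p)ˣ)
  have hog : orderOf g = p - 1 := by
    rw [orderOf_eq_card_of_forall_mem_zpowers hg, Nat.card_eq_fintype_card,
      ZMod.card_units_eq_totient, Nat.totient_prime Fact.out]
  have hζ : orderOf (g ^ ((p - 1) / 3)) = 3 := by
    rw [orderOf_pow, hog, Nat.gcd_eq_right (Nat.div_dvd_of_dvd hd),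
      Nat.div_div_self hd (by omega)]
  have hprim : IsPrimitiveRoot (g ^ ((p - 1) / 3)) 3 := by
    have h := IsPrimitiveRoot.orderOf (g ^ ((p - 1) / 3))
    rwa [hζ] at h
  have hprimc : IsPrimitiveRoot ((g ^ ((p - 1) / 3) : (ZMod p)ˣ) : ZMod p) 3 :=
    (IsPrimitiveRoot.coe_units_iff).mpr hprim
  have hcard := hprimc.card_nthRootsFinset
  have heq : (univ.filter fun y : ZMod p => y ^ 3 = 1) = nthRootsFinset 3 (1 : ZMod p) := by
    ext y
    simp [Polynomial.mem_nthRootsFinset (by norm_num : 0 < 3)]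
  rw [heq, hcard]

lemma exists_cube_root (χ : MulChar (ZMod p) ℂ) (hχ : χ ≠ 1) (hχ3 : χ ^ 3 = 1)
    {u : ZMod p} (hu : u ≠ 0) (h1 : χ u = 1) : ∃ v : ZMod p, v ^ 3 = u := by
  obtain ⟨g, hg⟩ := IsCyclic.exists_generator (α := (ZMod p)ˣ)
  set φ := χ.toUnitHom with hφ
  have hcoe : ∀ w : (ZMod p)ˣ, ((φ w : ℂˣ) : ℂ) = χ (w : ZMod p) := fun w =>
    MulChar.coe_toUnitHom χ w
  have hφg3 : (φ g) ^ 3 = 1 := by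
    ext
    push_cast [hcoe]
    rw [← hcoe]
    push_cast
    rw [hcoe]
    exact chi_cube_val χ hχ3 (Units.ne_zero g)
  have hφgne : φ g ≠ 1 := by
    intro h
    apply hχ
    apply MulChar.eq_one_iff.mpr
    intro w
    obtain ⟨k, hk⟩ := hg w
    rw [← hk, ← hcoe, map_zpow, h, one_zpow, Units.val_one]
  have hord : orderOf (φ g) = 3 := by
    have hdvd : orderOf (φ g) ∣ 3 := orderOf_dvd_of_pow_eq_one hφg3
    rcases (Nat.prime_three).eq_one_or_self_of_dvd _ hdvd with h | h
    · exact absurd (orderOf_eq_one_iff.mp h) hφgne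
    · exact h
  set uu : (ZMod p)ˣ := Units.mk0 u hu with huu
  obtain ⟨k, hk⟩ : ∃ k : ℕ, g ^ k = uu := by
    have := hg uu
    rwa [← mem_powers_iff_mem_zpowers, Submonoid.mem_powers_iff] at this
  have hφu : (φ g) ^ k = 1 := by
    rw [← map_pow, hk]
    ext
    rw [hcoe]
    simpa [huu] using h1
  have hdk : 3 ∣ k := hord ▸ orderOf_dvd_of_pow_eq_one hφu
  obtain ⟨m, rfl⟩ := hdk
  refine ⟨((g ^ m : (ZMod p)ˣ) : ZMod p), ?_⟩
  rw [← Units.val_pow_eq_pow_val, ← pow_mul, mul_comm m 3, hk]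
  rfl



lemma cube_fiber_card (h3 : p % 3 = 1) (χ : MulChar (ZMod p) ℂ) (hχ : χ ≠ 1)
    (hχ3 : χ ^ 3 = 1) {u : ZMod p} (hu : u ≠ 0) :
    ((univ.filter fun x : ZMod p => x ^ 3 = u).card : ℂ) = 1 + χ u + (χ u) ^ 2 := by
  by_cases h1 : χ u = 1
  · obtain ⟨v, hv⟩ := exists_cube_root χ hχ hχ3 hu h1
    have hvne : v ≠ 0 := by
      rintro rfl
      rw [← hv] at hu
      simp at hu
    have hbij : (univ.filter fun x : ZMod p => x ^ 3 = u).card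
        = (univ.filter fun y : ZMod p => y ^ 3 = 1).card := by
      apply Finset.card_bij' (fun x _ => x / v) (fun y _ => v * y)
      · intro x hx
        simp only [mem_filter, mem_univ, true_and] at hx ⊢
        rw [div_pow, hx, hv, div_self hu]
      · intro y hy
        simp only [mem_filter, mem_univ, true_and] at hy ⊢
        rw [mul_pow, hy, hv, mul_one]
      · intro x _
        field_simp
      · intro y _
        field_simp
    rw [hbij, card_cube_roots_one h3, h1]
    norm_num
  · have hempty : (univ.filter fun x : ZMod p => x ^ 3 = u) = ∅ := by
      ext x
      simp only [mem_filter, mem_univ, true_and, notMem_empty, iff_false]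
      intro hx
      apply h1
      have hxne : x ≠ 0 := by
        rintro rfl
        rw [← hx] at hu
        simp at hu
      rw [← hx, map_pow, ← MulChar.pow_apply' χ (by norm_num) x, hχ3]
      exact MulChar.one_apply (isUnit_iff_ne_zero.mpr hxne)
    have hcube := chi_cube_val χ hχ3 hu
    have key : (χ u - 1) * (1 + χ u + (χ u) ^ 2) = 0 := by linear_combination hcube
    rcases mul_eq_zero.mp key with h | h
    · exact absurd (by linear_combination h) h1
    · rw [hempty, h]
      simp

lemma cubic_exp_sum (h3 : p % 3 = 1) (χ : MulChar (ZMod p) ℂ) (hχ : χ ≠ 1)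
    (hχ3 : χ ^ 3 = 1) (ψ : AddChar (ZMod p) ℂ) (hψ : ψ.IsPrimitive) {t : ZMod p}
    (ht : t ≠ 0) :
    ∑ x : ZMod p, ψ (t * x ^ 3)
      = (χ t) ^ 2 * gaussSum χ ψ + (χ t) * gaussSum (χ ^ 2) ψ := by
  classical
  have hc := chi_cube_val χ hχ3 ht
  set tu : (ZMod p)ˣ := Units.mk0 t ht with htu
  have step1 : ∑ x : ZMod p, ψ (t * x ^ 3)
      = ∑ u : ZMod p, ((univ.filter fun x : ZMod p => x ^ 3 = u).card : ℂ) * ψ (t * u) := by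
    rw [← Finset.sum_fiberwise_of_maps_to (g := fun x : ZMod p => x ^ 3)
      (fun x _ => mem_univ _) (fun x => ψ (t * x ^ 3))]
    refine Finset.sum_congr rfl fun u _ => ?_
    have : ∑ x ∈ univ.filter (fun x : ZMod p => x ^ 3 = u), ψ (t * x ^ 3)
        = ∑ _x ∈ univ.filter (fun x : ZMod p => x ^ 3 = u), ψ (t * u) :=
      Finset.sum_congr rfl fun x hx => by rw [(mem_filter.mp hx).2]
    rw [this, Finset.sum_const, nsmul_eq_mul]
  have hf0 : ((univ.filter fun x : ZMod p => x ^ 3 = (0 : ZMod p)).card : ℂ) * ψ (t * 0) = 1 := by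
    have h00 : (univ.filter fun x : ZMod p => x ^ 3 = (0 : ZMod p)) = {0} := by
      ext x
      simp [pow_eq_zero_iff]
    rw [h00]
    simp
  have hsplit : ∑ u ∈ univ.erase (0 : ZMod p),
        ((univ.filter fun x : ZMod p => x ^ 3 = u).card : ℂ) * ψ (t * u)
      = (∑ u ∈ univ.erase (0 : ZMod p), ψ (t * u))
        + (∑ u ∈ univ.erase (0 : ZMod p), χ u * ψ (t * u))
        + (∑ u ∈ univ.erase (0 : ZMod p), (χ u) ^ 2 * ψ (t * u)) := by
    rw [← Finset.sum_add_distrib, ← Finset.sum_add_distrib]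
    refine Finset.sum_congr rfl fun u hu => ?_
    rw [cube_fiber_card h3 χ hχ hχ3 (Finset.mem_erase.mp hu).1]
    ring
  have hA : ∑ u ∈ univ.erase (0 : ZMod p), ψ (t * u) = -1 := by
    have h0 := AddChar.sum_mulShift t hψ
    rw [if_neg ht] at h0
    have hAll : ∑ u : ZMod p, ψ (t * u) = 0 := by
      calc ∑ u : ZMod p, ψ (t * u) = ∑ u : ZMod p, ψ (u * t) :=
            Finset.sum_congr rfl fun u _ => by rw [mul_comm]
        _ = 0 := by rw [h0]; norm_num
    rw [Finset.sum_erase_eq_sub (mem_univ 0), hAll]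
    simp
  have hB : ∑ u ∈ univ.erase (0 : ZMod p), χ u * ψ (t * u) = (χ t) ^ 2 * gaussSum χ ψ := by
    have hAll : ∑ u : ZMod p, χ u * ψ (t * u) = gaussSum χ (ψ.mulShift t) := by
      simp only [gaussSum, AddChar.mulShift_apply]
    have herase : ∑ u ∈ univ.erase (0 : ZMod p), χ u * ψ (t * u)
        = ∑ u : ZMod p, χ u * ψ (t * u) := by
      rw [Finset.sum_erase_eq_sub (mem_univ 0), MulChar.map_zero]
      ring
    have hgs := gaussSum_mulShift χ ψ tu
    rw [herase, hAll]
    have htv : (tu : ZMod p) = t := rfl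
    rw [htv] at hgs
    linear_combination (χ t) ^ 2 * hgs - gaussSum χ (ψ.mulShift t) * hc
  have hC : ∑ u ∈ univ.erase (0 : ZMod p), (χ u) ^ 2 * ψ (t * u)
      = (χ t) * gaussSum (χ ^ 2) ψ := by
    have hAll : ∑ u : ZMod p, (χ u) ^ 2 * ψ (t * u) = gaussSum (χ ^ 2) (ψ.mulShift t) := by
      simp only [gaussSum, AddChar.mulShift_apply, MulChar.pow_apply' χ two_ne_zero]
    have herase : ∑ u ∈ univ.erase (0 : ZMod p), (χ u) ^ 2 * ψ (t * u)
        = ∑ u : ZMod p, (χ u) ^ 2 * ψ (t * u) := by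
      rw [Finset.sum_erase_eq_sub (mem_univ 0), MulChar.map_zero]
      ring
    have hgs := gaussSum_mulShift (χ ^ 2) ψ tu
    have htv : (tu : ZMod p) = t := rfl
    rw [htv, MulChar.pow_apply' χ two_ne_zero] at hgs
    rw [herase, hAll]
    linear_combination (χ t) * hgs - gaussSum (χ ^ 2) (ψ.mulShift t) * hc
  rw [step1, ← Finset.add_sum_erase _ _ (mem_univ (0 : ZMod p)), hf0, hsplit, hA, hB, hC]
  ring

lemma sum_mul_sum4 {α : Type*} [Fintype α] (f g h k : α → ℂ) :
    ∑ v : α × α × α × α, f v.1 * g v.2.1 * h v.2.2.1 * k v.2.2.2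
      = (∑ x, k x) * ((∑ x, h x) * ((∑ x, g x) * (∑ x, f x))) := by
  simp only [Fintype.sum_prod_type, Finset.mul_sum, Finset.sum_mul]
  refine Finset.sum_congr rfl fun x _ => ?_
  refine Finset.sum_congr rfl fun y _ => ?_
  refine Finset.sum_congr rfl fun z _ => ?_
  refine Finset.sum_congr rfl fun w _ => ?_
  ring

theorem affine_count_character_formula (p : ℕ) [Fact p.Prime] (h3 : p % 3 = 1)
    (χ : MulChar (ZMod p) ℂ) (hχ : χ ≠ 1) (hχ3 : χ ^ 3 = 1)
    (a b c d : ZMod p) (ha : a ≠ 0) (hb : b ≠ 0) (hc : c ≠ 0) (hd : d ≠ 0) :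
    (Nat.card {v : ZMod p × ZMod p × ZMod p × ZMod p //
        a * v.1 ^ 3 + b * v.2.1 ^ 3 + c * v.2.2.1 ^ 3 + d * v.2.2.2 ^ 3 = 0} : ℂ) =
      (p : ℂ) ^ 3 + (p : ℂ) * ((p : ℂ) - 1) *
        (χ (a * b / (c * d)) + (starRingEnd ℂ) (χ (a * b / (c * d))) +
         χ (a * c / (b * d)) + (starRingEnd ℂ) (χ (a * c / (b * d))) +
         χ (a * d / (b * c)) + (starRingEnd ℂ) (χ (a * d / (b * c)))) := by
  classical
  have hpp : p.Prime := Fact.out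
  have hp0 : (p : ℂ) ≠ 0 := Nat.cast_ne_zero.mpr hpp.ne_zero
  set ψ := AddChar.FiniteField.primitiveChar_to_Complex (ZMod p) with hψdef
  have hψ : ψ.IsPrimitive := AddChar.FiniteField.primitiveChar_to_Complex_isPrimitive (ZMod p)
  set g₁ := gaussSum χ ψ with hg₁
  set g₂ := gaussSum (χ ^ 2) ψ with hg₂
  set A := χ a with hA
  set B := χ b with hB
  set C := χ c with hC
  set D := χ d with hD
  -- basic character facts
  have hχ2 : χ ^ 2 ≠ 1 := by
    intro h
    exact hχ (by rw [← hχ3, pow_succ, h, one_mul])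
  have hinv : χ⁻¹ = χ ^ 2 := by
    apply inv_eq_of_mul_eq_one_left
    rw [← pow_succ]
    exact hχ3
  have hχm1 : χ (-1) = 1 :=
    MulChar.val_neg_one_eq_one_of_odd_order (by decide : Odd 3) hχ3
  -- Gauss sum product
  have hgg : g₁ * g₂ = (p : ℂ) := by
    have h1 := gaussSum_mul_gaussSum_eq_card hχ hψ
    have h2 := mul_gaussSum_inv_eq_gaussSum χ⁻¹ ψ
    have hm1 : χ⁻¹ (-1) = 1 := by
      rw [hinv, MulChar.pow_apply' χ two_ne_zero, hχm1, one_pow]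
    rw [hm1, one_mul] at h2
    rw [hg₁, hg₂, ← hinv, ← h2, h1, ZMod.card]
  -- the six monomial terms
  have e1 : χ (a * b / (c * d)) = (A * B) * ((C * D)) ^ 2 := by
    rw [chi_div χ hχ3 (mul_ne_zero hc hd), map_mul, map_mul]
  have e1c : (starRingEnd ℂ) (χ (a * b / (c * d))) = (C * D) * ((A * B)) ^ 2 := by
    rw [chi_conj χ hχ3 (div_ne_zero (mul_ne_zero ha hb) (mul_ne_zero hc hd)), inv_div,
      chi_div χ hχ3 (mul_ne_zero ha hb), map_mul, map_mul]
  have e2 : χ (a * c / (b * d)) = (A * C) * ((B * D)) ^ 2 := by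
    rw [chi_div χ hχ3 (mul_ne_zero hb hd), map_mul, map_mul]
  have e2c : (starRingEnd ℂ) (χ (a * c / (b * d))) = (B * D) * ((A * C)) ^ 2 := by
    rw [chi_conj χ hχ3 (div_ne_zero (mul_ne_zero ha hc) (mul_ne_zero hb hd)), inv_div,
      chi_div χ hχ3 (mul_ne_zero ha hc), map_mul, map_mul]
  have e3 : χ (a * d / (b * c)) = (A * D) * ((B * C)) ^ 2 := by
    rw [chi_div χ hχ3 (mul_ne_zero hb hc), map_mul, map_mul]
  have e3c : (starRingEnd ℂ) (χ (a * d / (b * c))) = (B * C) * ((A * D)) ^ 2 := by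
    rw [chi_conj χ hχ3 (div_ne_zero (mul_ne_zero ha hd) (mul_ne_zero hb hc)), inv_div,
      chi_div χ hχ3 (mul_ne_zero ha hd), map_mul, map_mul]
  -- counting via additive characters
  have hN : (Nat.card {v : ZMod p × ZMod p × ZMod p × ZMod p //
        a * v.1 ^ 3 + b * v.2.1 ^ 3 + c * v.2.2.1 ^ 3 + d * v.2.2.2 ^ 3 = 0} : ℂ)
      = ∑ v : ZMod p × ZMod p × ZMod p × ZMod p,
          if a * v.1 ^ 3 + b * v.2.1 ^ 3 + c * v.2.2.1 ^ 3 + d * v.2.2.2 ^ 3 = 0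
          then (1 : ℂ) else 0 := by
    rw [Nat.card_eq_fintype_card, Fintype.card_subtype, Finset.card_filter, Nat.cast_sum]
    exact Finset.sum_congr rfl fun v _ => by split_ifs <;> simp
  have key1 : (Nat.card {v : ZMod p × ZMod p × ZMod p × ZMod p //
        a * v.1 ^ 3 + b * v.2.1 ^ 3 + c * v.2.2.1 ^ 3 + d * v.2.2.2 ^ 3 = 0} : ℂ) * p
      = ∑ s : ZMod p, ∑ v : ZMod p × ZMod p × ZMod p × ZMod p,
          ψ (s * (a * v.1 ^ 3 + b * v.2.1 ^ 3 + c * v.2.2.1 ^ 3 + d * v.2.2.2 ^ 3)) := by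
    rw [hN, Finset.sum_mul, Finset.sum_comm]
    refine Finset.sum_congr rfl fun v _ => ?_
    have hdelta := AddChar.sum_mulShift
      (a * v.1 ^ 3 + b * v.2.1 ^ 3 + c * v.2.2.1 ^ 3 + d * v.2.2.2 ^ 3) hψ
    rw [ZMod.card] at hdelta
    rw [hdelta]
    split_ifs <;> simp
  have key3 : ∀ s : ZMod p,
      (∑ v : ZMod p × ZMod p × ZMod p × ZMod p,
          ψ (s * (a * v.1 ^ 3 + b * v.2.1 ^ 3 + c * v.2.2.1 ^ 3 + d * v.2.2.2 ^ 3)))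
      = (∑ x : ZMod p, ψ (s * d * x ^ 3)) * ((∑ x : ZMod p, ψ (s * c * x ^ 3))
        * ((∑ x : ZMod p, ψ (s * b * x ^ 3)) * (∑ x : ZMod p, ψ (s * a * x ^ 3)))) := by
    intro s
    rw [← sum_mul_sum4 (fun x => ψ (s * a * x ^ 3)) (fun x => ψ (s * b * x ^ 3))
      (fun x => ψ (s * c * x ^ 3)) (fun x => ψ (s * d * x ^ 3))]
    refine Finset.sum_congr rfl fun v _ => ?_
    rw [show s * (a * v.1 ^ 3 + b * v.2.1 ^ 3 + c * v.2.2.1 ^ 3 + d * v.2.2.2 ^ 3)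
        = s * a * v.1 ^ 3 + (s * b * v.2.1 ^ 3 + (s * c * v.2.2.1 ^ 3 + s * d * v.2.2.2 ^ 3))
        by ring,
      AddChar.map_add_eq_mul, AddChar.map_add_eq_mul, AddChar.map_add_eq_mul]
    ring
  have Spow : ∀ k : ℕ, k ≠ 0 → (χ ^ k) ≠ 1 →
      ∑ s ∈ univ.erase (0 : ZMod p), (χ s) ^ k = 0 := by
    intro k hk hk1
    have hps : ∀ s : ZMod p, (χ s) ^ k = (χ ^ k) s := fun s =>
      (MulChar.pow_apply' χ hk s).symm
    simp only [hps]
    rw [Finset.sum_erase_eq_sub (mem_univ 0), MulChar.sum_eq_zero_of_ne_one hk1,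
      MulChar.map_zero]
    ring
  have S6 : ∑ s ∈ univ.erase (0 : ZMod p), (χ s) ^ 6 = (p : ℂ) - 1 := by
    have h6 : χ ^ 6 = 1 := by rw [show (6 : ℕ) = 3 * 2 from rfl, pow_mul, hχ3, one_pow]
    have hone : ∀ s ∈ univ.erase (0 : ZMod p), (χ s) ^ 6 = (1 : ℂ) := by
      intro s hs
      rw [← MulChar.pow_apply' χ (by norm_num) s, h6,
        MulChar.one_apply (isUnit_iff_ne_zero.mpr (Finset.mem_erase.mp hs).1)]
    rw [Finset.sum_congr rfl hone, Finset.sum_const,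
      Finset.card_erase_of_mem (mem_univ 0), Finset.card_univ, ZMod.card,
      nsmul_eq_mul, mul_one, Nat.cast_sub hpp.one_le, Nat.cast_one]
  have h4pow : χ ^ 4 = χ := by
    rw [show (4 : ℕ) = 3 + 1 from rfl, pow_add, hχ3, one_mul, pow_one]
  have h5pow : χ ^ 5 = χ ^ 2 := by
    rw [show (5 : ℕ) = 3 + 2 from rfl, pow_add, hχ3, one_mul]
  have h7pow : χ ^ 7 = χ := by
    rw [show (7 : ℕ) = 3 + (3 + 1) from rfl, pow_add, pow_add, hχ3, one_mul, one_mul,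
      pow_one]
  have h8pow : χ ^ 8 = χ ^ 2 := by
    rw [show (8 : ℕ) = 3 + (3 + 2) from rfl, pow_add, pow_add, hχ3, one_mul, one_mul]
  have key5 : ∀ s ∈ univ.erase (0 : ZMod p),
      (∑ x : ZMod p, ψ (s * d * x ^ 3)) * ((∑ x : ZMod p, ψ (s * c * x ^ 3))
        * ((∑ x : ZMod p, ψ (s * b * x ^ 3)) * (∑ x : ZMod p, ψ (s * a * x ^ 3))))
      = (A * B * C * D * g₂ ^ 4) * (χ s) ^ 4
        + ((A ^ 2 * B * C * D + B ^ 2 * A * C * D + C ^ 2 * A * B * D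
            + D ^ 2 * A * B * C) * (g₁ * g₂ ^ 3)) * (χ s) ^ 5
        + ((A ^ 2 * B ^ 2 * C * D + A ^ 2 * C ^ 2 * B * D + A ^ 2 * D ^ 2 * B * C
            + B ^ 2 * C ^ 2 * A * D + B ^ 2 * D ^ 2 * A * C + C ^ 2 * D ^ 2 * A * B)
            * (g₁ ^ 2 * g₂ ^ 2)) * (χ s) ^ 6
        + ((A ^ 2 * B ^ 2 * C ^ 2 * D + A ^ 2 * B ^ 2 * D ^ 2 * C
            + A ^ 2 * C ^ 2 * D ^ 2 * B + B ^ 2 * C ^ 2 * D ^ 2 * A)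
            * (g₁ ^ 3 * g₂)) * (χ s) ^ 7
        + (A ^ 2 * B ^ 2 * C ^ 2 * D ^ 2 * g₁ ^ 4) * (χ s) ^ 8 := by
    intro s hs
    have hs0 : s ≠ 0 := (Finset.mem_erase.mp hs).1
    rw [cubic_exp_sum h3 χ hχ hχ3 ψ hψ (mul_ne_zero hs0 ha),
      cubic_exp_sum h3 χ hχ hχ3 ψ hψ (mul_ne_zero hs0 hb),
      cubic_exp_sum h3 χ hχ hχ3 ψ hψ (mul_ne_zero hs0 hc),
      cubic_exp_sum h3 χ hχ hχ3 ψ hψ (mul_ne_zero hs0 hd),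
      map_mul χ s a, map_mul χ s b, map_mul χ s c, map_mul χ s d, hA, hB, hC, hD]
    ring
  have key6 : ∑ s ∈ univ.erase (0 : ZMod p),
      (∑ x : ZMod p, ψ (s * d * x ^ 3)) * ((∑ x : ZMod p, ψ (s * c * x ^ 3))
        * ((∑ x : ZMod p, ψ (s * b * x ^ 3)) * (∑ x : ZMod p, ψ (s * a * x ^ 3))))
      = ((p : ℂ) - 1) * ((A ^ 2 * B ^ 2 * C * D + A ^ 2 * C ^ 2 * B * D
          + A ^ 2 * D ^ 2 * B * C + B ^ 2 * C ^ 2 * A * D + B ^ 2 * D ^ 2 * A * C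
          + C ^ 2 * D ^ 2 * A * B) * (g₁ ^ 2 * g₂ ^ 2)) := by
    rw [Finset.sum_congr rfl key5, Finset.sum_add_distrib, Finset.sum_add_distrib,
      Finset.sum_add_distrib, Finset.sum_add_distrib]
    simp only [← Finset.mul_sum]
    rw [Spow 4 (by norm_num) (by rw [h4pow]; exact hχ),
      Spow 5 (by norm_num) (by rw [h5pow]; exact hχ2), S6,
      Spow 7 (by norm_num) (by rw [h7pow]; exact hχ),
      Spow 8 (by norm_num) (by rw [h8pow]; exact hχ2)]
    ring
  have total : (Nat.card {v : ZMod p × ZMod p × ZMod p × ZMod p //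
        a * v.1 ^ 3 + b * v.2.1 ^ 3 + c * v.2.2.1 ^ 3 + d * v.2.2.2 ^ 3 = 0} : ℂ) * p
      = (p : ℂ) ^ 4 + ((p : ℂ) - 1) * ((A ^ 2 * B ^ 2 * C * D + A ^ 2 * C ^ 2 * B * D
          + A ^ 2 * D ^ 2 * B * C + B ^ 2 * C ^ 2 * A * D + B ^ 2 * D ^ 2 * A * C
          + C ^ 2 * D ^ 2 * A * B) * (g₁ ^ 2 * g₂ ^ 2)) := by
    rw [key1, Finset.sum_congr rfl fun s _ => key3 s,
      ← Finset.add_sum_erase _ _ (mem_univ (0 : ZMod p)), key6]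
    have hG0 : (∑ x : ZMod p, ψ (0 * d * x ^ 3)) * ((∑ x : ZMod p, ψ (0 * c * x ^ 3))
        * ((∑ x : ZMod p, ψ (0 * b * x ^ 3)) * (∑ x : ZMod p, ψ (0 * a * x ^ 3))))
        = (p : ℂ) ^ 4 := by
      simp only [zero_mul, AddChar.map_zero_eq_one, Finset.sum_const, Finset.card_univ,
        ZMod.card, nsmul_eq_mul, mul_one]
      ring
    rw [hG0]
  rw [e1c, e2c, e3c, e1, e2, e3]
  apply mul_right_cancel₀ hp0
  linear_combination total
    + (((p : ℂ) - 1) * (A ^ 2 * B ^ 2 * C * D + A ^ 2 * C ^ 2 * B * D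
        + A ^ 2 * D ^ 2 * B * C + B ^ 2 * C ^ 2 * A * D + B ^ 2 * D ^ 2 * A * C
        + C ^ 2 * D ^ 2 * A * B) * (g₁ * g₂ + (p : ℂ))) * hgg
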